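/- Let M satisfy the Reset Cliff assumption. Let the dataset D consist of m ≥ 1 i.i.d. trajectories drawn from the trajectory distribution of the expert policy π^E, let P̂_h be the empirical maximum-likelihood estimate of P^{π^E}_h computed from D, and let π^{AIL}(D) be any (measurable) choice of global minimizer over all policies of L(π) = Σ_{h=1}^H Σ_{(s,a)} |P^π_h(s,a) − P̂_h(s,a)|. Then V^{π^E} − E_D[V^{π^{AIL}(D)}] ≤ 2·√((|S| − 1)/m). In particular, on Reset Cliff instances VAIL has a horizon-free sample complexity: O(|S|/ε²) expert trajectories suffice for an ε-optimal policy in expectation. -/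

import Mathlib

open Finset

/-- State distribution `d^π_h` of a policy `π` in an episodic tabular MDP
(time steps are 0-indexed: `stateDist ρ P π 0 = ρ`). -/
noncomputable def stateDist {S A : Type*} [Fintype S] [Fintype A] (ρ : S → ℝ)
    (P : ℕ → S → A → S → ℝ) (π : ℕ → S → A → ℝ) : ℕ → S → ℝ
  | 0 => ρ
  | h + 1 => fun s' => ∑ s : S, ∑ a : A, stateDist ρ P π h s * π h s a * P h s a s'

/-- State-action distribution `P^π_h(s,a) = d^π_h(s) π_h(a|s)`. -/
noncomputable def saDist {S A : Type*} [Fintype S] [Fintype A] (ρ : S → ℝ)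
    (P : ℕ → S → A → S → ℝ) (π : ℕ → S → A → ℝ) (h : ℕ) (s : S) (a : A) : ℝ :=
  stateDist ρ P π h s * π h s a

/-- Policy value `V^π = Σ_{h<H} Σ_{(s,a)} P^π_h(s,a) r_h(s,a)`. -/
noncomputable def policyValue {S A : Type*} [Fintype S] [Fintype A] (ρ : S → ℝ)
    (P : ℕ → S → A → S → ℝ) (π : ℕ → S → A → ℝ) (r : ℕ → S → A → ℝ) (H : ℕ) : ℝ :=
  ∑ h ∈ Finset.range H, ∑ s : S, ∑ a : A, saDist ρ P π h s a * r h s a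

/-- `π` is a (Markovian, non-stationary) policy. -/
def IsPolicy {S A : Type*} [Fintype A] (π : ℕ → S → A → ℝ) : Prop :=
  ∀ h s, (∀ a, 0 ≤ π h s a) ∧ (∑ a : A, π h s a) = 1

/-- `P` is a transition function. -/
def IsTransition {S A : Type*} [Fintype S] (P : ℕ → S → A → S → ℝ) : Prop :=
  ∀ h s a, (∀ s', 0 ≤ P h s a s') ∧ (∑ s' : S, P h s a s') = 1

/-- `ρ` is an initial state distribution. -/
def IsInitDist {S : Type*} [Fintype S] (ρ : S → ℝ) : Prop :=
  (∀ s, 0 ≤ ρ s) ∧ (∑ s : S, ρ s) = 1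

/-- Rewards take values in `[0,1]`. -/
def IsReward {S A : Type*} (r : ℕ → S → A → ℝ) : Prop :=
  ∀ h s a, 0 ≤ r h s a ∧ r h s a ≤ 1

/-- The VAIL state-action distribution matching objective
`L(π) = Σ_{h<H} Σ_{(s,a)} |P^π_h(s,a) − Q_h(s,a)|`. -/
noncomputable def vailLoss {S A : Type*} [Fintype S] [Fintype A] (ρ : S → ℝ)
    (P : ℕ → S → A → S → ℝ) (π : ℕ → S → A → ℝ) (Q : ℕ → S → A → ℝ) (H : ℕ) : ℝ :=
  ∑ h ∈ Finset.range H, ∑ s : S, ∑ a : A, |saDist ρ P π h s a - Q h s a|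

/-- The Reset Cliff assumption: good states `G` (with bad states `Gᶜ`), expert action `a1`. -/
def ResetCliff {S A : Type*} [Fintype S] [Fintype A] [DecidableEq S]
    (ρ : S → ℝ) (P : ℕ → S → A → S → ℝ) (r : ℕ → S → A → ℝ)
    (G : Finset S) (a1 : A) : Prop :=
  G.Nonempty ∧
  (∀ (h : ℕ), ∀ s ∈ G, r h s a1 = 1) ∧
  (∀ (h : ℕ) (s : S) (a : A), (s ∉ G ∨ a ≠ a1) → r h s a = 0) ∧
  (∀ (h : ℕ), ∀ s ∈ G, (∑ s' ∈ G, P h s a1 s') = 1) ∧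
  (∀ (h : ℕ), ∀ s ∈ G, ∀ s' ∈ G, 0 < P h s a1 s') ∧
  (∀ (h : ℕ), ∀ s ∈ G, ∀ a : A, a ≠ a1 → (∑ s' ∈ Gᶜ, P h s a s') = 1) ∧
  (∀ (h : ℕ), ∀ s ∉ G, ∀ a : A, (∑ s' ∈ Gᶜ, P h s a s') = 1) ∧
  (∀ s ∈ G, 0 < ρ s) ∧
  (∀ s ∉ G, ρ s = 0)

/-- Admissible estimates for the expert state-action distributions on a Reset Cliff instance. -/
def AdmissibleEst {S A : Type*} [Fintype S] [DecidableEq S]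
    (G : Finset S) (a1 : A) (Q : ℕ → S → A → ℝ) (H : ℕ) : Prop :=
  ∀ h < H, (∀ s a, 0 ≤ Q h s a) ∧
    (∀ (s : S) (a : A), (s ∉ G ∨ a ≠ a1) → Q h s a = 0) ∧
    (∑ s ∈ G, Q h s a1) = 1

/-- Probability of the (truncated) trajectory `t` of length `H` under policy `π`. -/
noncomputable def trajProb {S A : Type*} [Fintype S] [Fintype A] (ρ : S → ℝ)
    (P : ℕ → S → A → S → ℝ) (π : ℕ → S → A → ℝ) (H : ℕ) (t : ℕ → S × A) : ℝ :=
  ρ (t 0).1 * π 0 (t 0).1 (t 0).2 *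
    ∏ ℓ ∈ Finset.range (H - 1),
      (P ℓ (t ℓ).1 (t ℓ).2 (t (ℓ + 1)).1 * π (ℓ + 1) (t (ℓ + 1)).1 (t (ℓ + 1)).2)

/-- Extend a length-`H` trajectory to a function on all of `ℕ`. -/
noncomputable def extendTraj {S A : Type*} [Nonempty S] [Nonempty A] {H : ℕ}
    (tr : Fin H → S × A) : ℕ → S × A :=
  fun n => if h : 0 < H then tr ⟨n % H, Nat.mod_lt n h⟩ else Classical.arbitrary (S × A)

/-- The empirical (maximum likelihood) estimate of the state-action distribution
computed from the dataset `D` of `m` trajectories. -/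
noncomputable def empEst {S A : Type*} [Nonempty S] [Nonempty A]
    [DecidableEq S] [DecidableEq A] {H m : ℕ}
    (D : Fin m → Fin H → S × A) (h : ℕ) (s : S) (a : A) : ℝ :=
  (∑ i : Fin m, if extendTraj (D i) h = (s, a) then (1 : ℝ) else 0) / m

/-- Expectation of `f` over a dataset of `m` i.i.d. trajectories drawn from the
trajectory distribution of `π`. -/
noncomputable def datasetExp {S A : Type*} [Fintype S] [Fintype A] [Nonempty S] [Nonempty A]
    (ρ : S → ℝ) (P : ℕ → S → A → S → ℝ) (π : ℕ → S → A → ℝ)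
    (H m : ℕ) (f : (Fin m → Fin H → S × A) → ℝ) : ℝ :=
  ∑ D : Fin m → Fin H → S × A, (∏ i : Fin m, trajProb ρ P π H (extendTraj (D i))) * f D

set_option linter.unusedSectionVars false
set_option linter.unusedVariables false
set_option maxHeartbeats 1000000

section Aux
variable {S A : Type*} [Fintype S] [Fintype A] [DecidableEq S] [DecidableEq A]
variable {ρ : S → ℝ} {P : ℕ → S → A → S → ℝ} {πE : ℕ → S → A → ℝ}
variable {G : Finset S} {a1 : A}

lemma abs_key (y d q : ℝ) (h1 : y ≤ d) :
    |y - q| = |d - q| - (d - y) + 2 * min (d - y) (max (q - y) 0) := by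
  rcases le_total q y with h | h
  · rw [abs_of_nonneg (by linarith), abs_of_nonneg (by linarith),
      max_eq_right (by linarith), min_eq_right (by linarith)]
    ring
  · rcases le_total q d with h' | h'
    · rw [abs_of_nonpos (by linarith), abs_of_nonneg (by linarith),
        max_eq_left (by linarith), min_eq_right (by linarith)]
      ring
    · rw [abs_of_nonpos (by linarith), abs_of_nonpos (by linarith),
        max_eq_left (by linarith), min_eq_left (by linarith)]
      ring

lemma policy_le_one {π : ℕ → S → A → ℝ} (hπ : IsPolicy π) (h : ℕ) (s : S) (a : A) :
    π h s a ≤ 1 := by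
  have := (hπ h s).2
  calc π h s a ≤ ∑ a : A, π h s a :=
        Finset.single_le_sum (fun a _ => (hπ h s).1 a) (mem_univ a)
  _ = 1 := this

lemma expert_off (hE : IsPolicy πE) (hEa : ∀ h s, πE h s a1 = 1)
    (h : ℕ) (s : S) {a : A} (ha : a ≠ a1) : πE h s a = 0 := by
  have h1 : ∑ b ∈ (univ : Finset A).erase a1, πE h s b = 0 := by
    have := (hE h s).2
    rw [← Finset.add_sum_erase _ _ (mem_univ a1), hEa] at this
    linarith
  have := (Finset.sum_eq_zero_iff_of_nonneg (fun b _ => (hE h s).1 b)).1 h1 a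
    (Finset.mem_erase.2 ⟨ha, mem_univ a⟩)
  exact this

/-- sums of `P` out of `G`-states or non-`a1` actions put zero mass on good states -/
lemma P_into_G (hP : IsTransition P)
    (hbad : ∀ (h : ℕ), ∀ s ∈ G, ∀ a : A, a ≠ a1 → (∑ s' ∈ Gᶜ, P h s a s') = 1)
    (hbad2 : ∀ (h : ℕ), ∀ s ∉ G, ∀ a : A, (∑ s' ∈ Gᶜ, P h s a s') = 1)
    (h : ℕ) (s' : S) (a : A) (hcase : s' ∉ G ∨ a ≠ a1) {s : S} (hs : s ∈ G) :
    P h s' a s = 0 := by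
  have hc : ∑ t ∈ Gᶜ, P h s' a t = 1 := by
    rcases hcase with h1 | h1
    · exact hbad2 h s' h1 a
    · by_cases h2 : s' ∈ G
      · exact hbad h s' h2 a h1
      · exact hbad2 h s' h2 a
  have htot : ∑ t ∈ G, P h s' a t + ∑ t ∈ Gᶜ, P h s' a t = 1 := by
    rw [Finset.sum_add_sum_compl]; exact (hP h s' a).2
  have hzero : ∑ t ∈ G, P h s' a t = 0 := by linarith
  exact (Finset.sum_eq_zero_iff_of_nonneg (fun t _ => (hP h s' a).1 t)).1 hzero s hs

/-- from a good state, `a1` stays in `G` -/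
lemma P_stay_G (hP : IsTransition P)
    (hstay : ∀ (h : ℕ), ∀ s ∈ G, (∑ s' ∈ G, P h s a1 s') = 1)
    (h : ℕ) {s : S} (hs : s ∈ G) {t : S} (ht : t ∉ G) : P h s a1 t = 0 := by
  have htot : ∑ u ∈ G, P h s a1 u + ∑ u ∈ Gᶜ, P h s a1 u = 1 := by
    rw [Finset.sum_add_sum_compl]; exact (hP h s a1).2
  have hzero : ∑ u ∈ Gᶜ, P h s a1 u = 0 := by
    have := hstay h s hs; linarith
  exact (Finset.sum_eq_zero_iff_of_nonneg (fun u _ => (hP h s a1).1 u)).1 hzero t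
    (Finset.mem_compl.2 ht)

lemma stateDist_nonneg (hρ : IsInitDist ρ) (hP : IsTransition P)
    {π : ℕ → S → A → ℝ} (hπ : IsPolicy π) (h : ℕ) (s : S) :
    0 ≤ stateDist ρ P π h s := by
  induction h generalizing s with
  | zero => exact hρ.1 s
  | succ h ih =>
    refine Finset.sum_nonneg fun s' _ => Finset.sum_nonneg fun a _ => ?_
    exact mul_nonneg (mul_nonneg (ih s') ((hπ h s').1 a)) ((hP h s' a).1 s)

lemma stateDist_total (hρ : IsInitDist ρ) (hP : IsTransition P)
    {π : ℕ → S → A → ℝ} (hπ : IsPolicy π) (h : ℕ) :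
    ∑ s : S, stateDist ρ P π h s = 1 := by
  induction h with
  | zero => exact hρ.2
  | succ h ih =>
    have : ∑ s' : S, stateDist ρ P π (h+1) s'
        = ∑ s : S, ∑ a : A, stateDist ρ P π h s * π h s a * (∑ s' : S, P h s a s') := by
      show ∑ s' : S, ∑ s : S, ∑ a : A, _ = _
      rw [Finset.sum_comm]
      refine Finset.sum_congr rfl fun s _ => ?_
      rw [Finset.sum_comm]
      refine Finset.sum_congr rfl fun a _ => ?_
      rw [Finset.mul_sum]
    rw [this]
    calc ∑ s : S, ∑ a : A, stateDist ρ P π h s * π h s a * (∑ s' : S, P h s a s')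
        = ∑ s : S, stateDist ρ P π h s * ∑ a : A, π h s a := by
          refine Finset.sum_congr rfl fun s _ => ?_
          rw [Finset.mul_sum]
          exact Finset.sum_congr rfl fun a _ => by rw [(hP h s a).2, mul_one]
      _ = 1 := by
          rw [← ih]
          exact Finset.sum_congr rfl fun s _ => by rw [(hπ h s).2, mul_one]

lemma saDist_nonneg (hρ : IsInitDist ρ) (hP : IsTransition P)
    {π : ℕ → S → A → ℝ} (hπ : IsPolicy π) (h : ℕ) (s : S) (a : A) :
    0 ≤ saDist ρ P π h s a :=
  mul_nonneg (stateDist_nonneg hρ hP hπ h s) ((hπ h s).1 a)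

lemma saDist_total (hρ : IsInitDist ρ) (hP : IsTransition P)
    {π : ℕ → S → A → ℝ} (hπ : IsPolicy π) (h : ℕ) :
    ∑ s : S, ∑ a : A, saDist ρ P π h s a = 1 := by
  rw [← stateDist_total hρ hP hπ h]
  refine Finset.sum_congr rfl fun s _ => ?_
  unfold saDist
  rw [← Finset.mul_sum, (hπ h s).2, mul_one]


/-- expert stateDist vanishes off `G` -/
lemma dE_off (hρ2 : ∀ s ∉ G, ρ s = 0) (hP : IsTransition P)
    (hstay : ∀ (h : ℕ), ∀ s ∈ G, (∑ s' ∈ G, P h s a1 s') = 1)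
    (hE : IsPolicy πE) (hEa : ∀ h s, πE h s a1 = 1)
    (h : ℕ) : ∀ s ∉ G, stateDist ρ P πE h s = 0 := by
  induction h with
  | zero => exact hρ2
  | succ h ih =>
    intro t ht
    show (∑ s : S, ∑ a : A, stateDist ρ P πE h s * πE h s a * P h s a t) = 0
    refine Finset.sum_eq_zero fun s _ => Finset.sum_eq_zero fun a _ => ?_
    by_cases ha : a = a1
    · subst ha
      by_cases hs : s ∈ G
      · rw [P_stay_G hP hstay h hs ht, mul_zero]
      · rw [ih s hs, zero_mul, zero_mul]
    · rw [expert_off hE hEa h s ha, mul_zero, zero_mul]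

/-- expert recursion within `G` -/
lemma dE_recur (hρ2 : ∀ s ∉ G, ρ s = 0) (hP : IsTransition P)
    (hstay : ∀ (h : ℕ), ∀ s ∈ G, (∑ s' ∈ G, P h s a1 s') = 1)
    (hE : IsPolicy πE) (hEa : ∀ h s, πE h s a1 = 1) (h : ℕ) (t : S) :
    stateDist ρ P πE (h+1) t = ∑ s ∈ G, stateDist ρ P πE h s * P h s a1 t := by
  show (∑ s : S, ∑ a : A, stateDist ρ P πE h s * πE h s a * P h s a t) = _
  have : ∀ s : S, ∑ a : A, stateDist ρ P πE h s * πE h s a * P h s a t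
      = stateDist ρ P πE h s * P h s a1 t := by
    intro s
    rw [Finset.sum_eq_single a1]
    · rw [hEa, mul_one]
    · intro a _ ha; rw [expert_off hE hEa h s ha, mul_zero, zero_mul]
    · intro habs; exact absurd (mem_univ a1) habs
  rw [Finset.sum_congr rfl fun s _ => this s]
  rw [← Finset.sum_add_sum_compl G]
  have : ∑ s ∈ Gᶜ, stateDist ρ P πE h s * P h s a1 t = 0 := by
    refine Finset.sum_eq_zero fun s hs => ?_
    rw [dE_off hρ2 hP hstay hE hEa h s (Finset.mem_compl.1 hs), zero_mul]
  rw [this, add_zero]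

/-- expert mass on `G` is 1 -/
lemma dE_mass (hρ : IsInitDist ρ) (hρ2 : ∀ s ∉ G, ρ s = 0) (hP : IsTransition P)
    (hstay : ∀ (h : ℕ), ∀ s ∈ G, (∑ s' ∈ G, P h s a1 s') = 1)
    (hE : IsPolicy πE) (hEa : ∀ h s, πE h s a1 = 1) (h : ℕ) :
    ∑ s ∈ G, stateDist ρ P πE h s = 1 := by
  induction h with
  | zero =>
    have := hρ.2
    rw [← Finset.sum_add_sum_compl G] at this
    have h0 : ∑ s ∈ Gᶜ, ρ s = 0 :=
      Finset.sum_eq_zero fun s hs => hρ2 s (Finset.mem_compl.1 hs)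
    show ∑ s ∈ G, ρ s = 1
    rw [h0, add_zero] at this; exact this
  | succ h ih =>
    rw [Finset.sum_congr rfl fun t _ => dE_recur hρ2 hP hstay hE hEa h t,
      Finset.sum_comm]
    rw [← ih]
    refine Finset.sum_congr rfl fun s hs => ?_
    rw [← Finset.mul_sum, hstay h s hs, mul_one]

/-- any-policy recursion into `G` states -/
lemma dpi_recur (hP : IsTransition P)
    (hbad : ∀ (h : ℕ), ∀ s ∈ G, ∀ a : A, a ≠ a1 → (∑ s' ∈ Gᶜ, P h s a s') = 1)
    (hbad2 : ∀ (h : ℕ), ∀ s ∉ G, ∀ a : A, (∑ s' ∈ Gᶜ, P h s a s') = 1)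
    {π : ℕ → S → A → ℝ} (h : ℕ) {t : S} (ht : t ∈ G) :
    stateDist ρ P π (h+1) t = ∑ s ∈ G, saDist ρ P π h s a1 * P h s a1 t := by
  show (∑ s : S, ∑ a : A, stateDist ρ P π h s * π h s a * P h s a t) = _
  have key : ∀ s : S, ∑ a : A, stateDist ρ P π h s * π h s a * P h s a t
      = (if s ∈ G then saDist ρ P π h s a1 * P h s a1 t else 0) := by
    intro s
    by_cases hs : s ∈ G
    · rw [if_pos hs, Finset.sum_eq_single a1]
      · rfl
      · intro a _ ha
        rw [P_into_G hP hbad hbad2 h s a (Or.inr ha) ht, mul_zero]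
      · intro habs; exact absurd (mem_univ a1) habs
    · rw [if_neg hs]
      refine Finset.sum_eq_zero fun a _ => ?_
      rw [P_into_G hP hbad hbad2 h s a (Or.inl hs) ht, mul_zero]
  rw [Finset.sum_congr rfl fun s _ => key s, Finset.sum_ite_mem,
    Finset.univ_inter]

/-- domination: any policy's state distribution is below the expert's on `G` -/
lemma dpi_le_dE (hρ : IsInitDist ρ) (hρ2 : ∀ s ∉ G, ρ s = 0) (hP : IsTransition P)
    (hstay : ∀ (h : ℕ), ∀ s ∈ G, (∑ s' ∈ G, P h s a1 s') = 1)
    (hbad : ∀ (h : ℕ), ∀ s ∈ G, ∀ a : A, a ≠ a1 → (∑ s' ∈ Gᶜ, P h s a s') = 1)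
    (hbad2 : ∀ (h : ℕ), ∀ s ∉ G, ∀ a : A, (∑ s' ∈ Gᶜ, P h s a s') = 1)
    (hE : IsPolicy πE) (hEa : ∀ h s, πE h s a1 = 1)
    {π : ℕ → S → A → ℝ} (hπ : IsPolicy π) (h : ℕ) :
    ∀ t ∈ G, stateDist ρ P π h t ≤ stateDist ρ P πE h t := by
  induction h with
  | zero => intro t _; exact le_refl _
  | succ h ih =>
    intro t ht
    rw [dpi_recur hP hbad hbad2 h ht, dE_recur hρ2 hP hstay hE hEa h t]
    refine Finset.sum_le_sum fun s hs => ?_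
    refine mul_le_mul_of_nonneg_right ?_ ((hP h s a1).1 t)
    calc saDist ρ P π h s a1 ≤ stateDist ρ P π h s := by
          unfold saDist
          exact mul_le_of_le_one_right (stateDist_nonneg hρ hP hπ h s)
            (policy_le_one hπ h s a1)
      _ ≤ stateDist ρ P πE h s := ih s hs


/-- collapse a `(s,a)`-sum of an indicator-like summand to `G` -/
lemma vailSumCollapse {g : S → ℝ} :
    (∑ s : S, ∑ a : A, if s ∈ G ∧ a = a1 then g s else 0) = ∑ s ∈ G, g s := by
  have : ∀ s : S, (∑ a : A, if s ∈ G ∧ a = a1 then g s else 0)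
      = (if s ∈ G then g s else 0) := by
    intro s
    have : ∀ a : A, (if s ∈ G ∧ a = a1 then g s else 0)
        = (if a = a1 then (if s ∈ G then g s else 0) else 0) := by
      intro a
      by_cases h1 : a = a1 <;> by_cases h2 : s ∈ G <;> simp [h1, h2]
    rw [Finset.sum_congr rfl fun a _ => this a, Finset.sum_ite_eq' univ a1]
    simp
  rw [Finset.sum_congr rfl fun s _ => this s, Finset.sum_ite_mem, Finset.univ_inter]

/-- per-step loss decomposition -/
lemma loss_h_eq (hρ : IsInitDist ρ) (hP : IsTransition P)
    {π : ℕ → S → A → ℝ} (hπ : IsPolicy π) {q : ℕ → S → A → ℝ} {h : ℕ}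
    (hq0 : ∀ s a, 0 ≤ q h s a)
    (hqoff : ∀ (s : S) (a : A), (s ∉ G ∨ a ≠ a1) → q h s a = 0) :
    ∑ s : S, ∑ a : A, |saDist ρ P π h s a - q h s a|
      = (∑ s ∈ G, (|saDist ρ P π h s a1 - q h s a1| - saDist ρ P π h s a1)) + 1 := by
  have per : ∀ s a, |saDist ρ P π h s a - q h s a|
      = saDist ρ P π h s a + (if s ∈ G ∧ a = a1 then
          (|saDist ρ P π h s a1 - q h s a1| - saDist ρ P π h s a1) else 0) := by
    intro s a
    by_cases hc : s ∈ G ∧ a = a1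
    · rw [if_pos hc, hc.2]; ring
    · rw [if_neg hc]
      have : q h s a = 0 := by
        apply hqoff
        by_cases h1 : s ∈ G
        · right; intro h2; exact hc ⟨h1, h2⟩
        · left; exact h1
      rw [this, sub_zero, abs_of_nonneg (saDist_nonneg hρ hP hπ h s a), add_zero]
  calc ∑ s : S, ∑ a : A, |saDist ρ P π h s a - q h s a|
      = (∑ s : S, ∑ a : A, saDist ρ P π h s a)
        + ∑ s : S, ∑ a : A, (if s ∈ G ∧ a = a1 then
          (|saDist ρ P π h s a1 - q h s a1| - saDist ρ P π h s a1) else 0) := by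
        rw [← Finset.sum_add_distrib]
        refine Finset.sum_congr rfl fun s _ => ?_
        rw [← Finset.sum_add_distrib]
        exact Finset.sum_congr rfl fun a _ => per s a
    _ = _ := by
        rw [saDist_total hρ hP hπ h, vailSumCollapse, add_comm]

/-- the loss difference identity -/
lemma loss_diff (hρ : IsInitDist ρ) (hρ2 : ∀ s ∉ G, ρ s = 0) (hP : IsTransition P)
    (hstay : ∀ (h : ℕ), ∀ s ∈ G, (∑ s' ∈ G, P h s a1 s') = 1)
    (hbad : ∀ (h : ℕ), ∀ s ∈ G, ∀ a : A, a ≠ a1 → (∑ s' ∈ Gᶜ, P h s a s') = 1)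
    (hbad2 : ∀ (h : ℕ), ∀ s ∉ G, ∀ a : A, (∑ s' ∈ Gᶜ, P h s a s') = 1)
    (hE : IsPolicy πE) (hEa : ∀ h s, πE h s a1 = 1)
    {π : ℕ → S → A → ℝ} (hπ : IsPolicy π) {q : ℕ → S → A → ℝ} {H : ℕ}
    (hq : AdmissibleEst G a1 q H) :
    vailLoss ρ P π q H = vailLoss ρ P πE q H
      + 2 * ∑ h ∈ Finset.range H, ∑ s ∈ G,
          min (stateDist ρ P πE h s - saDist ρ P π h s a1)
            (max (q h s a1 - saDist ρ P π h s a1) 0) := by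
  unfold vailLoss
  rw [Finset.mul_sum, ← Finset.sum_add_distrib]
  refine Finset.sum_congr rfl fun h hh => ?_
  have hh' := Finset.mem_range.1 hh
  obtain ⟨hq0, hqoff, hqmass⟩ := hq h hh'
  rw [loss_h_eq hρ hP hπ hq0 hqoff, loss_h_eq hρ hP hE hq0 hqoff]
  have hsaE : ∀ s, saDist ρ P πE h s a1 = stateDist ρ P πE h s := by
    intro s; unfold saDist; rw [hEa, mul_one]
  have key : ∀ s ∈ G, |saDist ρ P π h s a1 - q h s a1| - saDist ρ P π h s a1
      = (|saDist ρ P πE h s a1 - q h s a1| - saDist ρ P πE h s a1)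
        + 2 * min (stateDist ρ P πE h s - saDist ρ P π h s a1)
            (max (q h s a1 - saDist ρ P π h s a1) 0) := by
    intro s hs
    rw [hsaE]
    have hyd : saDist ρ P π h s a1 ≤ stateDist ρ P πE h s := by
      calc saDist ρ P π h s a1 ≤ stateDist ρ P π h s :=
            mul_le_of_le_one_right (stateDist_nonneg hρ hP hπ h s) (policy_le_one hπ h s a1)
        _ ≤ _ := dpi_le_dE hρ hρ2 hP hstay hbad hbad2 hE hEa hπ h s hs
    have := abs_key (saDist ρ P π h s a1) (stateDist ρ P πE h s) (q h s a1) hyd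
    rw [this]; ring
  rw [Finset.sum_congr rfl key, Finset.sum_add_distrib, Finset.mul_sum]
  ring


/-- value formula via the reward structure -/
lemma value_eq {r : ℕ → S → A → ℝ}
    (hr1 : ∀ (h : ℕ), ∀ s ∈ G, r h s a1 = 1)
    (hr0 : ∀ (h : ℕ) (s : S) (a : A), (s ∉ G ∨ a ≠ a1) → r h s a = 0)
    (π : ℕ → S → A → ℝ) (H : ℕ) :
    policyValue ρ P π r H = ∑ h ∈ Finset.range H, ∑ s ∈ G, saDist ρ P π h s a1 := by
  unfold policyValue
  refine Finset.sum_congr rfl fun h _ => ?_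
  rw [← vailSumCollapse (G := G) (a1 := a1) (g := fun s => saDist ρ P π h s a1)]
  refine Finset.sum_congr rfl fun s _ => Finset.sum_congr rfl fun a _ => ?_
  by_cases hc : s ∈ G ∧ a = a1
  · rw [if_pos hc, hc.2, hr1 h s hc.1, mul_one]
  · have : r h s a = 0 := by
      apply hr0
      by_cases h1 : s ∈ G
      · right; intro h2; exact hc ⟨h1, h2⟩
      · left; exact h1
    rw [if_neg hc, this, mul_zero]

/-- THE deterministic core bound -/
theorem det_bound {r : ℕ → S → A → ℝ}
    (hρ : IsInitDist ρ) (hP : IsTransition P) (hE : IsPolicy πE)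
    (hG : G.Nonempty)
    (hr1 : ∀ (h : ℕ), ∀ s ∈ G, r h s a1 = 1)
    (hr0 : ∀ (h : ℕ) (s : S) (a : A), (s ∉ G ∨ a ≠ a1) → r h s a = 0)
    (hstay : ∀ (h : ℕ), ∀ s ∈ G, (∑ s' ∈ G, P h s a1 s') = 1)
    (hpos : ∀ (h : ℕ), ∀ s ∈ G, ∀ s' ∈ G, 0 < P h s a1 s')
    (hbad : ∀ (h : ℕ), ∀ s ∈ G, ∀ a : A, a ≠ a1 → (∑ s' ∈ Gᶜ, P h s a s') = 1)
    (hbad2 : ∀ (h : ℕ), ∀ s ∉ G, ∀ a : A, (∑ s' ∈ Gᶜ, P h s a s') = 1)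
    (hρ1 : ∀ s ∈ G, 0 < ρ s) (hρ2 : ∀ s ∉ G, ρ s = 0)
    (hEa : ∀ h s, πE h s a1 = 1)
    {π : ℕ → S → A → ℝ} (hπ : IsPolicy π) {q : ℕ → S → A → ℝ} {H : ℕ} (hH : 1 ≤ H)
    (hq : AdmissibleEst G a1 q H)
    (hle : vailLoss ρ P π q H ≤ vailLoss ρ P πE q H) :
    policyValue ρ P πE r H - policyValue ρ P π r H
      ≤ ∑ s ∈ G, |stateDist ρ P πE (H-1) s - q (H-1) s a1| := by
  set y : ℕ → S → ℝ := fun h s => saDist ρ P π h s a1 with hy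
  set d : ℕ → S → ℝ := fun h s => stateDist ρ P πE h s with hd
  have hyd : ∀ h, ∀ s ∈ G, y h s ≤ d h s := by
    intro h s hs
    calc y h s ≤ stateDist ρ P π h s :=
          mul_le_of_le_one_right (stateDist_nonneg hρ hP hπ h s) (policy_le_one hπ h s a1)
      _ ≤ d h s := dpi_le_dE hρ hρ2 hP hstay hbad hbad2 hE hEa hπ h s hs
  -- all min-terms vanish
  have hmin0 : ∀ h ∈ Finset.range H, ∀ s ∈ G,
      min (d h s - y h s) (max (q h s a1 - y h s) 0) = 0 := by
    have hdiff := loss_diff hρ hρ2 hP hstay hbad hbad2 hE hEa hπ hq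
    have hsum : ∑ h ∈ Finset.range H, ∑ s ∈ G,
        min (d h s - y h s) (max (q h s a1 - y h s) 0) ≤ 0 := by
      rw [hdiff] at hle; linarith
    have hnn : ∀ h ∈ Finset.range H, ∀ s ∈ G,
        0 ≤ min (d h s - y h s) (max (q h s a1 - y h s) 0) := by
      intro h _ s hs
      exact le_min (by have := hyd h s hs; linarith) (le_max_right _ _)
    have hz : ∑ h ∈ Finset.range H, ∑ s ∈ G,
        min (d h s - y h s) (max (q h s a1 - y h s) 0) = 0 :=
      le_antisymm hsum (Finset.sum_nonneg fun h hh =>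
        Finset.sum_nonneg fun s hs => hnn h hh s hs)
    intro h hh s hs
    have h1 := (Finset.sum_eq_zero_iff_of_nonneg fun h hh =>
      Finset.sum_nonneg fun s hs => hnn h hh s hs).1 hz h hh
    exact (Finset.sum_eq_zero_iff_of_nonneg fun s hs => hnn h hh s hs).1 h1 s hs
  have hkey : ∀ h < H, ∀ s ∈ G, d h s ≤ y h s ∨ q h s a1 ≤ y h s := by
    intro h hh s hs
    have := hmin0 h (Finset.mem_range.2 hh) s hs
    rcases le_total (d h s - y h s) (max (q h s a1 - y h s) 0) with hc | hc
    · left; rw [min_eq_left hc] at this; linarith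
    · right
      rw [min_eq_right hc] at this
      have : q h s a1 - y h s ≤ 0 := by
        calc q h s a1 - y h s ≤ max (q h s a1 - y h s) 0 := le_max_left _ _
        _ = 0 := this
      linarith
  -- no mass dropped before the last step
  have hprop : ∀ h, h + 1 < H → ∀ s ∈ G, d h s ≤ y h s := by
    intro h hh1 s hs
    by_contra hcon
    push_neg at hcon
    -- positive deficit propagates to all good states at h+1
    have hstep : ∀ t ∈ G, 0 < d (h+1) t - y (h+1) t := by
      intro t ht
      have h1 : d (h+1) t = ∑ s' ∈ G, d h s' * P h s' a1 t :=
        dE_recur hρ2 hP hstay hE hEa h t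
      have h2 : stateDist ρ P π (h+1) t = ∑ s' ∈ G, y h s' * P h s' a1 t :=
        dpi_recur hP hbad hbad2 h ht
      have h3 : y (h+1) t ≤ stateDist ρ P π (h+1) t :=
        mul_le_of_le_one_right (stateDist_nonneg hρ hP hπ (h+1) t) (policy_le_one hπ (h+1) t a1)
      have h4 : d (h+1) t - y (h+1) t
          ≥ ∑ s' ∈ G, (d h s' - y h s') * P h s' a1 t := by
        rw [ge_iff_le]
        calc ∑ s' ∈ G, (d h s' - y h s') * P h s' a1 t
            = (∑ s' ∈ G, d h s' * P h s' a1 t) - ∑ s' ∈ G, y h s' * P h s' a1 t := by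
              rw [← Finset.sum_sub_distrib]
              exact Finset.sum_congr rfl fun s' _ => by ring
          _ = d (h+1) t - stateDist ρ P π (h+1) t := by rw [h1, h2]
          _ ≤ d (h+1) t - y (h+1) t := by linarith
      have h5 : 0 < ∑ s' ∈ G, (d h s' - y h s') * P h s' a1 t := by
        have hterm : ∀ s' ∈ G, 0 ≤ (d h s' - y h s') * P h s' a1 t := by
          intro s' hs'
          exact mul_nonneg (by have := hyd h s' hs'; linarith) ((hP h s' a1).1 t)
        have hone : 0 < (d h s - y h s) * P h s a1 t :=
          mul_pos (by linarith) (hpos h s hs t ht)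
        calc (0:ℝ) < (d h s - y h s) * P h s a1 t := hone
          _ ≤ ∑ s' ∈ G, (d h s' - y h s') * P h s' a1 t :=
            Finset.single_le_sum hterm hs
      linarith
    -- at step h+1 the estimate is totally covered, contradiction
    have hcov : ∀ t ∈ G, q (h+1) t a1 ≤ y (h+1) t := by
      intro t ht
      rcases hkey (h+1) hh1 t ht with hc | hc
      · exact absurd hc (by have := hstep t ht; linarith)
      · exact hc
    have hqm := (hq (h+1) hh1).2.2
    have hyt : ∑ t ∈ G, y (h+1) t ≤ 1 := by
      calc ∑ t ∈ G, y (h+1) t ≤ ∑ t ∈ G, d (h+1) t :=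
            Finset.sum_le_sum fun t ht => hyd (h+1) t ht
        _ = 1 := dE_mass hρ hρ2 hP hstay hE hEa (h+1)
    have h1le : (1:ℝ) ≤ ∑ t ∈ G, y (h+1) t := by
      rw [← hqm]; exact Finset.sum_le_sum hcov
    have hzero : ∑ t ∈ G, (d (h+1) t - y (h+1) t) = 0 := by
      rw [Finset.sum_sub_distrib, dE_mass hρ hρ2 hP hstay hE hEa (h+1)]
      linarith
    obtain ⟨t0, ht0⟩ := hG
    have : 0 < ∑ t ∈ G, (d (h+1) t - y (h+1) t) := by
      have hnn : ∀ t ∈ G, 0 ≤ d (h+1) t - y (h+1) t :=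
        fun t ht => le_of_lt (hstep t ht)
      calc (0:ℝ) < d (h+1) t0 - y (h+1) t0 := hstep t0 ht0
        _ ≤ ∑ t ∈ G, (d (h+1) t - y (h+1) t) := Finset.single_le_sum hnn ht0
    linarith
  -- assemble
  rw [value_eq hr1 hr0 πE H, value_eq hr1 hr0 π H, ← Finset.sum_sub_distrib]
  have hsaE : ∀ h s, saDist ρ P πE h s a1 = d h s := by
    intro h s; unfold saDist; rw [hEa, mul_one]
  calc ∑ h ∈ Finset.range H, ((∑ s ∈ G, saDist ρ P πE h s a1) - ∑ s ∈ G, y h s)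
      = ∑ h ∈ Finset.range H, ∑ s ∈ G, (d h s - y h s) := by
        refine Finset.sum_congr rfl fun h _ => ?_
        rw [Finset.sum_sub_distrib]
        congr 1
        exact Finset.sum_congr rfl fun s _ => hsaE h s
    _ ≤ ∑ h ∈ Finset.range H, (if h = H - 1 then
          ∑ s ∈ G, |d (H-1) s - q (H-1) s a1| else 0) := by
        refine Finset.sum_le_sum fun h hh => ?_
        have hh' := Finset.mem_range.1 hh
        by_cases hc : h = H - 1
        · rw [if_pos hc, hc]
          refine Finset.sum_le_sum fun s hs => ?_
          rcases hkey (H-1) (by omega) s hs with h1 | h1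
          · calc d (H-1) s - y (H-1) s ≤ 0 := by linarith
              _ ≤ |d (H-1) s - q (H-1) s a1| := abs_nonneg _
          · calc d (H-1) s - y (H-1) s ≤ d (H-1) s - q (H-1) s a1 := by linarith
              _ ≤ |d (H-1) s - q (H-1) s a1| := le_abs_self _
        · rw [if_neg hc]
          refine Finset.sum_nonpos fun s hs => ?_
          have := hprop h (by omega) s hs
          linarith
    _ = ∑ s ∈ G, |d (H-1) s - q (H-1) s a1| := by
        rw [Finset.sum_ite_eq' (Finset.range H) (H-1)]
        rw [if_pos (Finset.mem_range.2 (by omega))]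

end Aux

noncomputable def chainDist {X : Type*} [Fintype X] (w : X → ℝ) (K : ℕ → X → X → ℝ) :
    ℕ → X → ℝ
  | 0 => w
  | h + 1 => fun y => ∑ x : X, chainDist w K h x * K h x y

lemma chainDist_shift {X : Type*} [Fintype X] (w : X → ℝ) (K : ℕ → X → X → ℝ) (h : ℕ) :
    chainDist (fun y => ∑ x : X, w x * K 0 x y) (fun ℓ => K (ℓ + 1)) h
      = chainDist w K (h + 1) := by
  induction h with
  | zero => rfl
  | succ h ih =>
    funext y
    show ∑ x : X, chainDist (fun y => ∑ x : X, w x * K 0 x y) (fun ℓ => K (ℓ + 1)) h x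
        * K (h + 1) x y = _
    rw [Finset.sum_congr rfl fun x _ => by rw [ih]]
    rfl

lemma chain_marginal {X : Type*} [Fintype X] :
    ∀ (n : ℕ) (w : X → ℝ) (K : ℕ → X → X → ℝ),
    (∀ ℓ x, ∑ y : X, K ℓ x y = 1) → ∀ (h : ℕ) (hh : h < n + 1) (φ : X → ℝ),
    ∑ t : Fin (n + 1) → X,
        (w (t 0) * ∏ ℓ : Fin n, K ℓ (t ℓ.castSucc) (t ℓ.succ)) * φ (t ⟨h, hh⟩)
      = ∑ x : X, chainDist w K h x * φ x := by
  intro n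
  induction n with
  | zero =>
    intro w K hK h hh φ
    have h0 : h = 0 := by omega
    subst h0
    rw [← Equiv.sum_comp (Equiv.funUnique (Fin 1) X).symm]
    simp [chainDist]
  | succ n ih =>
    intro w K hK h hh φ
    have split : ∀ (F : (Fin (n + 2) → X) → ℝ),
        ∑ t : Fin (n + 2) → X, F t = ∑ x : X, ∑ t' : Fin (n + 1) → X, F (Fin.cons x t') := by
      intro F
      have e1 : ∑ p : X × (Fin (n + 1) → X), F (Fin.cons p.1 p.2) = ∑ t, F t :=
        Fintype.sum_equiv (Fin.consEquiv (fun _ : Fin (n + 2) => X)) _ _ (fun p => rfl)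
      have e2 := Fintype.sum_prod_type
        (f := fun p : X × (Fin (n + 1) → X) => F (Fin.cons p.1 p.2))
      exact e1.symm.trans e2
    rw [split]
    have prodEq : ∀ (x : X) (t' : Fin (n + 1) → X),
        (∏ ℓ : Fin (n + 1), K ℓ ((Fin.cons x t' : Fin (n+2) → X) ℓ.castSucc)
          ((Fin.cons x t' : Fin (n+2) → X) ℓ.succ))
        = K 0 x (t' 0) * ∏ ℓ : Fin n, K (ℓ + 1) (t' ℓ.castSucc) (t' ℓ.succ) := by
      intro x t'
      rw [Fin.prod_univ_succ]
      refine congrArg₂ (· * ·) ?_ (Finset.prod_congr rfl fun ℓ _ => ?_)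
      · rw [Fin.cons_succ, Fin.castSucc_zero, Fin.cons_zero]
        norm_num
      · rw [← Fin.succ_castSucc, Fin.cons_succ, Fin.cons_succ, Fin.val_succ]
    match h with
    | 0 =>
      have inner : ∀ x : X,
          ∑ t' : Fin (n + 1) → X,
            (K 0 x (t' 0) * ∏ ℓ : Fin n, K (ℓ + 1) (t' ℓ.castSucc) (t' ℓ.succ)) = 1 := by
        intro x
        have := ih (fun y => K 0 x y) (fun ℓ => K (ℓ + 1)) (fun ℓ z => hK (ℓ + 1) z)
          0 (by omega) (fun _ => 1)
        simpa [chainDist, hK 0 x] using this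
      calc ∑ x : X, ∑ t' : Fin (n + 1) → X,
            (w ((Fin.cons x t' : Fin (n+2) → X) 0) *
              ∏ ℓ : Fin (n + 1), K ℓ ((Fin.cons x t' : Fin (n+2) → X) ℓ.castSucc)
                ((Fin.cons x t' : Fin (n+2) → X) ℓ.succ))
            * φ ((Fin.cons x t' : Fin (n+2) → X) ⟨0, hh⟩)
          = ∑ x : X, (w x * φ x) *
              ∑ t' : Fin (n + 1) → X,
                (K 0 x (t' 0) * ∏ ℓ : Fin n, K (ℓ + 1) (t' ℓ.castSucc) (t' ℓ.succ)) := by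
            refine Finset.sum_congr rfl fun x _ => ?_
            rw [Finset.mul_sum]
            refine Finset.sum_congr rfl fun t' _ => ?_
            rw [prodEq x t']
            have hz : (Fin.cons x t' : Fin (n+2) → X) ⟨0, hh⟩ = x := rfl
            have hz0 : (Fin.cons x t' : Fin (n+2) → X) 0 = x := rfl
            rw [hz, hz0]; ring
        _ = ∑ x : X, chainDist w K 0 x * φ x := by
            refine Finset.sum_congr rfl fun x _ => ?_
            rw [inner x, mul_one]
            rfl
    | h' + 1 =>
      have hh' : h' < n + 1 := by omega
      have key : ∀ (x : X) (t' : Fin (n + 1) → X),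
          (w ((Fin.cons x t' : Fin (n+2) → X) 0) *
            ∏ ℓ : Fin (n + 1), K ℓ ((Fin.cons x t' : Fin (n+2) → X) ℓ.castSucc)
              ((Fin.cons x t' : Fin (n+2) → X) ℓ.succ))
          * φ ((Fin.cons x t' : Fin (n+2) → X) ⟨h' + 1, hh⟩)
          = (w x * K 0 x (t' 0)) *
              (∏ ℓ : Fin n, K (ℓ + 1) (t' ℓ.castSucc) (t' ℓ.succ)) * φ (t' ⟨h', hh'⟩) := by
        intro x t'
        rw [prodEq x t']
        have h1 : (Fin.cons x t' : Fin (n+2) → X) 0 = x := rfl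
        have h2 : (Fin.cons x t' : Fin (n+2) → X) ⟨h' + 1, hh⟩ = t' ⟨h', hh'⟩ := by
          have : (⟨h' + 1, hh⟩ : Fin (n + 2)) = Fin.succ ⟨h', hh'⟩ := rfl
          rw [this, Fin.cons_succ]
        rw [h1, h2]; ring
      rw [Finset.sum_congr rfl fun x _ => Finset.sum_congr rfl fun t' _ => key x t']
      rw [Finset.sum_comm]
      have step : ∀ t' : Fin (n + 1) → X,
          ∑ x : X, (w x * K 0 x (t' 0)) *
              (∏ ℓ : Fin n, K (ℓ + 1) (t' ℓ.castSucc) (t' ℓ.succ)) * φ (t' ⟨h', hh'⟩)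
          = ((fun y => ∑ x : X, w x * K 0 x y) (t' 0) *
              ∏ ℓ : Fin n, K (ℓ + 1) (t' ℓ.castSucc) (t' ℓ.succ)) * φ (t' ⟨h', hh'⟩) := by
        intro t'
        rw [← Finset.sum_mul, ← Finset.sum_mul]
      rw [Finset.sum_congr rfl fun t' _ => step t']
      rw [ih (fun y => ∑ x : X, w x * K 0 x y) (fun ℓ => K (ℓ + 1))
        (fun ℓ z => hK (ℓ + 1) z) h' hh' φ]
      rw [chainDist_shift]


section Traj
variable {S A : Type*} [Fintype S] [Fintype A] [Nonempty S] [Nonempty A] [DecidableEq S] [DecidableEq A]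
variable {ρ : S → ℝ} {P : ℕ → S → A → S → ℝ} {π : ℕ → S → A → ℝ}

/-- the step kernel on state-action pairs -/
noncomputable def saKer (P : ℕ → S → A → S → ℝ) (π : ℕ → S → A → ℝ)
    (ℓ : ℕ) (x y : S × A) : ℝ := P ℓ x.1 x.2 y.1 * π (ℓ + 1) y.1 y.2

lemma saKer_row (hP : IsTransition P) (hπ : IsPolicy π) (ℓ : ℕ) (x : S × A) :
    ∑ y : S × A, saKer P π ℓ x y = 1 := by
  rw [Fintype.sum_prod_type]
  have : ∀ s' : S, ∑ a' : A, saKer P π ℓ x (s', a') = P ℓ x.1 x.2 s' := by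
    intro s'
    unfold saKer
    show ∑ a' : A, P ℓ x.1 x.2 s' * π (ℓ + 1) s' a' = _
    rw [← Finset.mul_sum, (hπ (ℓ+1) s').2, mul_one]
  rw [Finset.sum_congr rfl fun s' _ => this s']
  exact (hP ℓ x.1 x.2).2

lemma chainDist_eq_saDist (h : ℕ) :
    ∀ x : S × A, chainDist (fun x : S × A => ρ x.1 * π 0 x.1 x.2) (saKer P π) h x
      = saDist ρ P π h x.1 x.2 := by
  induction h with
  | zero => intro x; rfl
  | succ h ih =>
    intro y
    show ∑ x : S × A, chainDist _ _ h x * saKer P π h x y = _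
    rw [Finset.sum_congr rfl fun x _ => by rw [ih x]]
    unfold saDist saKer
    show ∑ x : S × A, stateDist ρ P π h x.1 * π h x.1 x.2 * (P h x.1 x.2 y.1 * π (h+1) y.1 y.2)
      = stateDist ρ P π (h+1) y.1 * π (h+1) y.1 y.2
    have : stateDist ρ P π (h+1) y.1
        = ∑ s : S, ∑ a : A, stateDist ρ P π h s * π h s a * P h s a y.1 := rfl
    rw [this, Finset.sum_mul, Fintype.sum_prod_type]
    refine Finset.sum_congr rfl fun s _ => ?_
    rw [Finset.sum_mul]
    exact Finset.sum_congr rfl fun a _ => by ring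

lemma extendTraj_lt {H : ℕ} (tr : Fin H → S × A) {k : ℕ} (hk : k < H) :
    extendTraj tr k = tr ⟨k, hk⟩ := by
  unfold extendTraj
  rw [dif_pos (by omega : 0 < H)]
  congr 1
  exact Fin.ext (Nat.mod_eq_of_lt hk)

lemma trajProb_ext (n : ℕ) (tr : Fin (n + 1) → S × A) :
    trajProb ρ P π (n + 1) (extendTraj tr)
      = (ρ (tr 0).1 * π 0 (tr 0).1 (tr 0).2)
        * ∏ ℓ : Fin n, saKer P π ℓ (tr ℓ.castSucc) (tr ℓ.succ) := by
  unfold trajProb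
  have h0 : extendTraj tr 0 = tr 0 := extendTraj_lt tr (by omega)
  have hn : n + 1 - 1 = n := rfl
  rw [h0, hn]
  congr 1
  rw [← Fin.prod_univ_eq_prod_range (fun ℓ =>
    P ℓ (extendTraj tr ℓ).1 (extendTraj tr ℓ).2 (extendTraj tr (ℓ+1)).1
      * π (ℓ+1) (extendTraj tr (ℓ+1)).1 (extendTraj tr (ℓ+1)).2) n]
  refine Finset.prod_congr rfl fun ℓ _ => ?_
  have h1 : extendTraj tr (↑ℓ : ℕ) = tr ℓ.castSucc := by
    rw [extendTraj_lt tr (by omega : (↑ℓ : ℕ) < n + 1)]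
    congr 1
  have h2 : extendTraj tr ((↑ℓ : ℕ) + 1) = tr ℓ.succ := by
    rw [extendTraj_lt tr (by omega : (↑ℓ : ℕ) + 1 < n + 1)]
    congr 1
  rw [h1, h2]
  rfl

lemma traj_marginal (hρ : IsInitDist ρ) (hP : IsTransition P) (hπ : IsPolicy π)
    (n : ℕ) (h : ℕ) (hh : h < n + 1) (φ : S × A → ℝ) :
    ∑ tr : Fin (n + 1) → S × A,
        trajProb ρ P π (n + 1) (extendTraj tr) * φ (tr ⟨h, hh⟩)
      = ∑ s : S, ∑ a : A, saDist ρ P π h s a * φ (s, a) := by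
  rw [Finset.sum_congr rfl fun tr _ => by rw [trajProb_ext n tr]]
  rw [chain_marginal n (fun x : S × A => ρ x.1 * π 0 x.1 x.2) (saKer P π)
    (saKer_row hP hπ) h hh φ]
  rw [Fintype.sum_prod_type]
  exact Finset.sum_congr rfl fun s _ => Finset.sum_congr rfl fun a _ => by
    rw [chainDist_eq_saDist]

lemma traj_total (hρ : IsInitDist ρ) (hP : IsTransition P) (hπ : IsPolicy π)
    (n : ℕ) :
    ∑ tr : Fin (n + 1) → S × A, trajProb ρ P π (n + 1) (extendTraj tr) = 1 := by
  have := traj_marginal hρ hP hπ n 0 (by omega) (fun _ => 1)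
  simp only [mul_one] at this
  rw [this]
  exact saDist_total hρ hP hπ 0

end Traj

section ProdMeas
variable {T : Type*} [Fintype T]

lemma exp_coord {w : T → ℝ} (hw : ∑ t : T, w t = 1) {m : ℕ} (F : T → ℝ) (i : Fin m) :
    ∑ D : Fin m → T, (∏ k : Fin m, w (D k)) * F (D i) = ∑ t : T, w t * F t := by
  have key : ∀ D : Fin m → T, (∏ k : Fin m, w (D k)) * F (D i)
      = ∏ k : Fin m, (w (D k) * (if k = i then F (D k) else 1)) := by
    intro D
    rw [Finset.prod_mul_distrib, Finset.prod_ite_eq' univ i (fun k => F (D k)),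
      if_pos (mem_univ i)]
  rw [Finset.sum_congr rfl fun D _ => key D]
  have piUniv := Fintype.piFinset_univ (α := Fin m) (β := fun _ => T)
  have pus := Finset.prod_univ_sum (t := fun _ : Fin m => (univ : Finset T))
    (f := fun k t => w t * (if k = i then F t else 1))
  rw [piUniv] at pus
  rw [← pus]
  have per : ∀ k : Fin m, (∑ t : T, w t * (if k = i then F t else 1))
      = (if k = i then (∑ t : T, w t * F t) else 1) := by
    intro k
    by_cases hk : k = i
    · subst hk; simp
    · simp [hk, hw]
  rw [Finset.prod_congr rfl fun k _ => per k,
    Finset.prod_ite_eq' univ i (fun _ => ∑ t : T, w t * F t), if_pos (mem_univ i)]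

lemma prod_two' {m : ℕ} {i j : Fin m} (hij : i ≠ j) (c : Fin m → ℝ) (vi vj : ℝ)
    (hi : c i = vi) (hjv : c j = vj) (hc : ∀ k, k ≠ i → k ≠ j → c k = 1) :
    ∏ k : Fin m, c k = vi * vj := by
  have hj : j ∈ (univ : Finset (Fin m)).erase i :=
    Finset.mem_erase.2 ⟨Ne.symm hij, mem_univ j⟩
  rw [← Finset.mul_prod_erase univ c (mem_univ i), ← Finset.mul_prod_erase _ c hj]
  have : ∏ k ∈ ((univ : Finset (Fin m)).erase i).erase j, c k = 1 := by
    refine Finset.prod_eq_one fun k hk => ?_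
    have h1 := Finset.mem_erase.1 hk
    have h2 := Finset.mem_erase.1 h1.2
    exact hc k h2.1 h1.1
  rw [this, mul_one, hi, hjv]

lemma exp_pair {w : T → ℝ} (hw : ∑ t : T, w t = 1) {m : ℕ} (F F' : T → ℝ)
    {i j : Fin m} (hij : i ≠ j) :
    ∑ D : Fin m → T, (∏ k : Fin m, w (D k)) * (F (D i) * F' (D j))
      = (∑ t : T, w t * F t) * (∑ t : T, w t * F' t) := by
  have key : ∀ D : Fin m → T, (∏ k : Fin m, w (D k)) * (F (D i) * F' (D j))
      = ∏ k : Fin m, (w (D k) * (if k = i then F (D k) else if k = j then F' (D k) else 1)) := by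
    intro D
    rw [Finset.prod_mul_distrib]
    congr 1
    exact (prod_two' hij _ (F (D i)) (F' (D j)) (by simp) (by simp [Ne.symm hij])
      (fun k h1 h2 => by simp [h1, h2])).symm
  rw [Finset.sum_congr rfl fun D _ => key D]
  have piUniv := Fintype.piFinset_univ (α := Fin m) (β := fun _ => T)
  have pus := Finset.prod_univ_sum (t := fun _ : Fin m => (univ : Finset T))
    (f := fun k t => w t * (if k = i then F t else if k = j then F' t else 1))
  rw [piUniv] at pus
  rw [← pus]
  have per : ∀ k : Fin m, (∑ t : T, w t * (if k = i then F t else if k = j then F' t else 1))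
      = (if k = i then (∑ t : T, w t * F t) else if k = j then (∑ t : T, w t * F' t) else 1) := by
    intro k
    by_cases h1 : k = i
    · subst h1; simp
    · by_cases h2 : k = j
      · subst h2; simp [h1]
      · simp [h1, h2, hw]
  rw [Finset.prod_congr rfl fun k _ => per k]
  exact prod_two' hij _ _ _ (by simp) (by simp [Ne.symm hij]) (fun k h1 h2 => by simp [h1, h2])

lemma exp_total {w : T → ℝ} (hw : ∑ t : T, w t = 1) (m : ℕ) :
    ∑ D : Fin m → T, (∏ k : Fin m, w (D k)) = 1 := by
  have piUniv := Fintype.piFinset_univ (α := Fin m) (β := fun _ => T)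
  have pus := Finset.prod_univ_sum (t := fun _ : Fin m => (univ : Finset T))
    (f := fun _ t => w t)
  rw [piUniv] at pus
  rw [← pus, Finset.prod_congr rfl fun k _ => hw, Finset.prod_const_one]

end ProdMeas

section Cons
variable {S A : Type*} [Fintype S] [Fintype A] [Nonempty S] [Nonempty A]
  [DecidableEq S] [DecidableEq A]
variable {ρ : S → ℝ} {P : ℕ → S → A → S → ℝ} {πE : ℕ → S → A → ℝ}
variable {G : Finset S} {a1 : A}

lemma traj_consistent (hP : IsTransition P)
    (hstay : ∀ (h : ℕ), ∀ s ∈ G, (∑ s' ∈ G, P h s a1 s') = 1)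
    (hE : IsPolicy πE) (hEa : ∀ h s, πE h s a1 = 1)
    (hρ2 : ∀ s ∉ G, ρ s = 0)
    {n : ℕ} {tr : Fin (n + 1) → S × A}
    (hne : trajProb ρ P πE (n + 1) (extendTraj tr) ≠ 0) :
    ∀ k : Fin (n + 1), (tr k).1 ∈ G ∧ (tr k).2 = a1 := by
  rw [trajProb_ext n tr] at hne
  obtain ⟨h0, hprod⟩ := mul_ne_zero_iff.1 hne
  obtain ⟨hρ0, hπ0⟩ := mul_ne_zero_iff.1 h0
  have hfac : ∀ ℓ : Fin n,
      P ℓ (tr ℓ.castSucc).1 (tr ℓ.castSucc).2 (tr ℓ.succ).1 ≠ 0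
      ∧ πE (ℓ + 1) (tr ℓ.succ).1 (tr ℓ.succ).2 ≠ 0 := by
    intro ℓ
    have := Finset.prod_ne_zero_iff.1 hprod ℓ (mem_univ ℓ)
    unfold saKer at this
    exact mul_ne_zero_iff.1 this
  have hact : ∀ k : Fin (n + 1), (tr k).2 = a1 := by
    rintro ⟨kv, hk⟩
    match kv, hk with
    | 0, hk =>
      by_contra hcon
      exact hπ0 (expert_off hE hEa 0 (tr 0).1 hcon)
    | ℓv + 1, hk =>
      have hℓ : ℓv < n := by omega
      have hsucc : (⟨ℓv + 1, hk⟩ : Fin (n + 1)) = (⟨ℓv, hℓ⟩ : Fin n).succ := rfl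
      rw [hsucc]
      by_contra hcon
      exact (hfac ⟨ℓv, hℓ⟩).2 (expert_off hE hEa _ _ hcon)
  have hstate : ∀ kv (hk : kv < n + 1), (tr ⟨kv, hk⟩).1 ∈ G := by
    intro kv
    induction kv with
    | zero =>
      intro hk
      by_contra hcon
      exact hρ0 (hρ2 _ hcon)
    | succ ℓv ih =>
      intro hk
      have hℓ : ℓv < n := by omega
      have hc : (⟨ℓv, by omega⟩ : Fin (n+1)) = (⟨ℓv, hℓ⟩ : Fin n).castSucc := rfl
      have hs : (⟨ℓv + 1, hk⟩ : Fin (n + 1)) = (⟨ℓv, hℓ⟩ : Fin n).succ := rfl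
      by_contra hcon
      refine (hfac ⟨ℓv, hℓ⟩).1 ?_
      have hmem : (tr (⟨ℓv, hℓ⟩ : Fin n).castSucc).1 ∈ G := by
        rw [← hc]; exact ih (by omega)
      have hactℓ : (tr (⟨ℓv, hℓ⟩ : Fin n).castSucc).2 = a1 := hact _
      rw [hactℓ]
      refine P_stay_G hP hstay _ hmem ?_
      rw [← hs]; exact hcon
  exact fun k => ⟨by have := hstate k.val k.isLt; rwa [Fin.eta] at this, hact k⟩

lemma empEst_admiss {m : ℕ} (hm : 1 ≤ m) {n : ℕ} (D : Fin m → Fin (n + 1) → S × A)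
    (hcons : ∀ i (k : Fin (n + 1)), ((D i) k).1 ∈ G ∧ ((D i) k).2 = a1) :
    AdmissibleEst G a1 (empEst D) (n + 1) := by
  have hm0 : (m : ℝ) ≠ 0 := Nat.cast_ne_zero.2 (by omega)
  intro h hh
  have hkey : ∀ i, (extendTraj (D i) h).1 ∈ G ∧ (extendTraj (D i) h).2 = a1 := by
    intro i
    unfold extendTraj
    rw [dif_pos (by omega : 0 < n + 1)]
    exact hcons i _
  refine ⟨?_, ?_, ?_⟩
  · intro s a
    unfold empEst
    refine div_nonneg (Finset.sum_nonneg fun i _ => ?_) (Nat.cast_nonneg m)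
    split <;> norm_num
  · intro s a hcase
    unfold empEst
    rw [Finset.sum_eq_zero, zero_div]
    intro i _
    rw [if_neg]
    intro heq
    obtain ⟨h1, h2⟩ := hkey i
    rw [heq] at h1 h2
    rcases hcase with hc | hc
    · exact hc h1
    · exact hc h2
  · unfold empEst
    rw [← Finset.sum_div, Finset.sum_comm]
    have inner : ∀ i : Fin m,
        (∑ s ∈ G, if extendTraj (D i) h = (s, a1) then (1:ℝ) else 0) = 1 := by
      intro i
      obtain ⟨h1, h2⟩ := hkey i
      have per : ∀ s : S, (if extendTraj (D i) h = (s, a1) then (1:ℝ) else 0)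
          = if s = (extendTraj (D i) h).1 then 1 else 0 := by
        intro s
        by_cases hs : s = (extendTraj (D i) h).1
        · subst hs
          rw [if_pos rfl, if_pos]
          rw [← h2]
        · rw [if_neg hs, if_neg]
          intro heq
          rw [heq] at hs
          exact hs rfl
      rw [Finset.sum_congr rfl fun s _ => per s,
        Finset.sum_ite_eq' G ((extendTraj (D i) h).1) (fun _ => (1:ℝ)), if_pos h1]
    rw [Finset.sum_congr rfl fun i _ => inner i, Finset.sum_const, Finset.card_univ,
      Fintype.card_fin, nsmul_eq_mul, mul_one, div_self hm0]

end Cons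

section Dev

/-- expected absolute deviation of an empirical mean of indicators -/
lemma exp_abs_dev {T : Type*} [Fintype T] {w : T → ℝ} (hw0 : ∀ t, 0 ≤ w t)
    (hw : ∑ t : T, w t = 1) {m : ℕ} (hm : 1 ≤ m) (X : T → ℝ)
    (hX : ∀ t, X t = 0 ∨ X t = 1) {p : ℝ} (hp : ∑ t : T, w t * X t = p) :
    ∑ D : Fin m → T, (∏ k : Fin m, w (D k)) * |(∑ i : Fin m, X (D i)) / m - p|
      ≤ Real.sqrt (p * (1 - p) / m) := by
  have hm0 : (m : ℝ) ≠ 0 := Nat.cast_ne_zero.2 (by omega)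
  set W : (Fin m → T) → ℝ := fun D => ∏ k : Fin m, w (D k) with hW
  have hW0 : ∀ D, 0 ≤ W D := fun D => Finset.prod_nonneg fun k _ => hw0 (D k)
  have hWtot : ∑ D : Fin m → T, W D = 1 := exp_total hw m
  set Z : T → ℝ := fun t => X t - p with hZ
  have hZmean : ∑ t : T, w t * Z t = 0 := by
    simp only [hZ, mul_sub, Finset.sum_sub_distrib, hp, ← Finset.sum_mul, hw]
    ring
  have hZsq : ∑ t : T, w t * (Z t * Z t) = p * (1 - p) := by
    have : ∀ t, w t * (Z t * Z t) = w t * X t - 2 * p * (w t * X t) + p ^ 2 * w t := by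
      intro t
      rcases hX t with h | h <;> simp [hZ, h] <;> ring
    rw [Finset.sum_congr rfl fun t _ => this t]
    rw [Finset.sum_add_distrib, Finset.sum_sub_distrib, ← Finset.mul_sum, ← Finset.mul_sum,
      hp, hw]
    ring
  -- second moment
  have E2 : ∑ D : Fin m → T, W D * ((∑ i : Fin m, X (D i)) / m - p) ^ 2
      = p * (1 - p) / m := by
    have hdev : ∀ D : Fin m → T, (∑ i : Fin m, X (D i)) / m - p
        = (∑ i : Fin m, Z (D i)) / m := by
      intro D
      rw [hZ]
      simp only [Finset.sum_sub_distrib, Finset.sum_const, Finset.card_univ, Fintype.card_fin]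
      field_simp
      rw [nsmul_eq_mul]
    have hsq : ∀ D : Fin m → T, W D * ((∑ i : Fin m, X (D i)) / m - p) ^ 2
        = (∑ i : Fin m, ∑ j : Fin m, W D * (Z (D i) * Z (D j))) / (m * m) := by
      intro D
      rw [hdev D, div_pow, sq, Finset.sum_mul_sum]
      have hpush : (∑ i : Fin m, ∑ j : Fin m, W D * (Z (D i) * Z (D j)))
          = W D * ∑ i : Fin m, ∑ j : Fin m, Z (D i) * Z (D j) := by
        rw [Finset.mul_sum]
        exact Finset.sum_congr rfl fun i _ => by rw [Finset.mul_sum]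
      rw [hpush, pow_two]
      ring
    rw [Finset.sum_congr rfl fun D _ => hsq D, ← Finset.sum_div]
    rw [Finset.sum_comm]
    have swap : ∀ i : Fin m, ∑ D : Fin m → T, ∑ j : Fin m, W D * (Z (D i) * Z (D j))
        = ∑ j : Fin m, ∑ D : Fin m → T, W D * (Z (D i) * Z (D j)) := fun i =>
      Finset.sum_comm
    rw [Finset.sum_congr rfl fun i _ => swap i]
    have cell : ∀ i j : Fin m, (∑ D : Fin m → T, W D * (Z (D i) * Z (D j)))
        = if j = i then p * (1 - p) else 0 := by
      intro i j
      by_cases hij : j = i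
      · subst hij
        rw [if_pos rfl]
        have h1 : ∑ D : Fin m → T, W D * (Z (D j) * Z (D j))
            = ∑ t : T, w t * (Z t * Z t) := exp_coord hw (fun t => Z t * Z t) j
        rw [h1, hZsq]
      · rw [if_neg hij]
        have h1 : ∑ D : Fin m → T, W D * (Z (D i) * Z (D j))
            = (∑ t : T, w t * Z t) * (∑ t : T, w t * Z t) :=
          exp_pair hw Z Z (Ne.symm hij)
        rw [h1, hZmean, mul_zero]
    rw [Finset.sum_congr rfl fun i _ => Finset.sum_congr rfl fun j _ => cell i j]
    have : ∀ i : Fin m, (∑ j : Fin m, if j = i then p * (1 - p) else 0) = p * (1 - p) := by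
      intro i
      rw [Finset.sum_ite_eq' univ i (fun _ => p * (1 - p)), if_pos (mem_univ i)]
    rw [Finset.sum_congr rfl fun i _ => this i, Finset.sum_const, Finset.card_univ,
      Fintype.card_fin, nsmul_eq_mul]
    field_simp
  -- Cauchy–Schwarz
  have cs := Finset.sum_mul_sq_le_sq_mul_sq Finset.univ
    (fun D : Fin m → T => Real.sqrt (W D))
    (fun D : Fin m → T => Real.sqrt (W D) * |(∑ i : Fin m, X (D i)) / m - p|)
  have lhs_eq : ∀ D : Fin m → T,
      Real.sqrt (W D) * (Real.sqrt (W D) * |(∑ i : Fin m, X (D i)) / m - p|)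
      = W D * |(∑ i : Fin m, X (D i)) / m - p| := by
    intro D
    rw [← mul_assoc, Real.mul_self_sqrt (hW0 D)]
  have sq1 : ∀ D : Fin m → T, Real.sqrt (W D) ^ 2 = W D := fun D => Real.sq_sqrt (hW0 D)
  have sq2 : ∀ D : Fin m → T,
      (Real.sqrt (W D) * |(∑ i : Fin m, X (D i)) / m - p|) ^ 2
      = W D * ((∑ i : Fin m, X (D i)) / m - p) ^ 2 := by
    intro D
    rw [mul_pow, Real.sq_sqrt (hW0 D), sq_abs]
  rw [Finset.sum_congr rfl fun D _ => lhs_eq D, Finset.sum_congr rfl fun D _ => sq1 D,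
    Finset.sum_congr rfl fun D _ => sq2 D, hWtot, one_mul, E2] at cs
  exact Real.le_sqrt_of_sq_le cs

end Dev

/-- on any Reset Cliff instance, with a dataset `D` of `m ≥ 1` i.i.d. expert
trajectories, the empirical MLE `empEst D`, and any choice `πAIL D` of global minimizer of the
VAIL objective, one has the horizon-free bound
`V^{πE} − E_D[V^{πAIL(D)}] ≤ 2 √((|S|−1)/m)`. -/
theorem vail_reset_cliff_horizon_free {S A : Type*} [Fintype S] [Fintype A]
    [Nonempty S] [Nonempty A] [DecidableEq S] [DecidableEq A]
    (ρ : S → ℝ) (P : ℕ → S → A → S → ℝ) (r : ℕ → S → A → ℝ) (πE : ℕ → S → A → ℝ)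
    (G : Finset S) (a1 : A) (H : ℕ) (hH : 1 ≤ H)
    (hρ : IsInitDist ρ) (hP : IsTransition P) (hr : IsReward r) (hE : IsPolicy πE)
    (hRC : ResetCliff ρ P r G a1)
    (hEa : ∀ h s, πE h s a1 = 1)
    (m : ℕ) (hm : 1 ≤ m)
    (πAIL : (Fin m → Fin H → S × A) → ℕ → S → A → ℝ)
    (hpol : ∀ D, IsPolicy (πAIL D))
    (hmin : ∀ D, ∀ π, IsPolicy π →
        vailLoss ρ P (πAIL D) (empEst D) H ≤ vailLoss ρ P π (empEst D) H) :
    policyValue ρ P πE r H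
        - datasetExp ρ P πE H m (fun D => policyValue ρ P (πAIL D) r H)
      ≤ 2 * Real.sqrt (((Fintype.card S : ℝ) - 1) / m) := by
  obtain ⟨hG, hr1, hr0, hstay, hpos, hbad, hbad2, hρ1, hρ2⟩ := hRC
  obtain ⟨n, rfl⟩ : ∃ n, H = n + 1 := ⟨H - 1, by omega⟩
  have hm0 : (m : ℝ) ≠ 0 := Nat.cast_ne_zero.2 (by omega)
  have hnlt : n < n + 1 := by omega
  -- weights
  have hw0 : ∀ tr : Fin (n+1) → S × A, 0 ≤ trajProb ρ P πE (n+1) (extendTraj tr) := by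
    intro tr
    rw [trajProb_ext n tr]
    refine mul_nonneg (mul_nonneg (hρ.1 _) ((hE 0 _).1 _))
      (Finset.prod_nonneg fun ℓ _ => ?_)
    unfold saKer
    exact mul_nonneg ((hP _ _ _).1 _) ((hE _ _).1 _)
  have hwtot : ∑ tr : Fin (n+1) → S × A, trajProb ρ P πE (n+1) (extendTraj tr) = 1 :=
    traj_total hρ hP hE n
  have hWtot : ∑ D : Fin m → Fin (n+1) → S × A,
      (∏ i : Fin m, trajProb ρ P πE (n+1) (extendTraj (D i))) = 1 :=
    exp_total hwtot m
  have hW0 : ∀ D : Fin m → Fin (n+1) → S × A,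
      0 ≤ ∏ i : Fin m, trajProb ρ P πE (n+1) (extendTraj (D i)) :=
    fun D => Finset.prod_nonneg fun i _ => hw0 (D i)
  -- expert marginal p
  set p : S → ℝ := fun s => stateDist ρ P πE n s with hpdef
  have hp0 : ∀ s, 0 ≤ p s := fun s => stateDist_nonneg hρ hP hE n s
  have hpmass : ∑ s ∈ G, p s = 1 := dE_mass hρ hρ2 hP hstay hE hEa n
  have hp1 : ∀ s ∈ G, p s ≤ 1 := by
    intro s hs
    calc p s ≤ ∑ s' ∈ G, p s' := Finset.single_le_sum (fun s' _ => hp0 s') hs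
      _ = 1 := hpmass
  -- Step A: write LHS as expected gap
  rw [show datasetExp ρ P πE (n+1) m (fun D => policyValue ρ P (πAIL D) r (n+1))
      = ∑ D : Fin m → Fin (n+1) → S × A,
        (∏ i : Fin m, trajProb ρ P πE (n+1) (extendTraj (D i)))
          * policyValue ρ P (πAIL D) r (n+1) from rfl]
  have hVE : policyValue ρ P πE r (n+1)
      = ∑ D : Fin m → Fin (n+1) → S × A,
        (∏ i : Fin m, trajProb ρ P πE (n+1) (extendTraj (D i)))
          * policyValue ρ P πE r (n+1) := by
    rw [← Finset.sum_mul, hWtot, one_mul]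
  rw [hVE, ← Finset.sum_sub_distrib]
  have hgap : ∀ D : Fin m → Fin (n+1) → S × A,
      (∏ i : Fin m, trajProb ρ P πE (n+1) (extendTraj (D i)))
          * policyValue ρ P πE r (n+1)
        - (∏ i : Fin m, trajProb ρ P πE (n+1) (extendTraj (D i)))
          * policyValue ρ P (πAIL D) r (n+1)
      = (∏ i : Fin m, trajProb ρ P πE (n+1) (extendTraj (D i)))
          * (policyValue ρ P πE r (n+1) - policyValue ρ P (πAIL D) r (n+1)) := by
    intro D; ring
  rw [Finset.sum_congr rfl fun D _ => hgap D]
  -- Step B: per-dataset deterministic bound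
  have hperD : ∀ D : Fin m → Fin (n+1) → S × A,
      (∏ i : Fin m, trajProb ρ P πE (n+1) (extendTraj (D i)))
          * (policyValue ρ P πE r (n+1) - policyValue ρ P (πAIL D) r (n+1))
      ≤ (∏ i : Fin m, trajProb ρ P πE (n+1) (extendTraj (D i)))
          * (∑ s ∈ G, |p s - empEst D n s a1|) := by
    intro D
    by_cases hD : (∏ i : Fin m, trajProb ρ P πE (n+1) (extendTraj (D i))) = 0
    · rw [hD, zero_mul, zero_mul]
    · refine mul_le_mul_of_nonneg_left ?_ (hW0 D)
      have hcons : ∀ i (k : Fin (n + 1)), ((D i) k).1 ∈ G ∧ ((D i) k).2 = a1 := by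
        intro i
        have hne : trajProb ρ P πE (n+1) (extendTraj (D i)) ≠ 0 :=
          Finset.prod_ne_zero_iff.1 hD i (mem_univ i)
        exact traj_consistent hP hstay hE hEa hρ2 hne
      have hadm := empEst_admiss (G := G) (a1 := a1) hm D hcons
      have := det_bound (r := r) hρ hP hE hG hr1 hr0 hstay hpos hbad hbad2 hρ1 hρ2 hEa
        (hpol D) (by omega : 1 ≤ n + 1) hadm (hmin D πE hE)
      exact this
  refine le_trans (Finset.sum_le_sum fun D _ => hperD D) ?_
  -- Step C: exchange sums and bound each coordinate
  have hswap : ∑ D : Fin m → Fin (n+1) → S × A,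
      (∏ i : Fin m, trajProb ρ P πE (n+1) (extendTraj (D i)))
        * (∑ s ∈ G, |p s - empEst D n s a1|)
      = ∑ s ∈ G, ∑ D : Fin m → Fin (n+1) → S × A,
          (∏ i : Fin m, trajProb ρ P πE (n+1) (extendTraj (D i)))
            * |p s - empEst D n s a1| := by
    rw [Finset.sum_congr rfl fun D _ => Finset.mul_sum _ _ _]
    exact Finset.sum_comm
  rw [hswap]
  -- per-state concentration
  have hper_s : ∀ s ∈ G, ∑ D : Fin m → Fin (n+1) → S × A,
      (∏ i : Fin m, trajProb ρ P πE (n+1) (extendTraj (D i)))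
        * |p s - empEst D n s a1|
      ≤ Real.sqrt (p s * (1 - p s) / m) := by
    intro s hs
    have hX01 : ∀ tr : Fin (n+1) → S × A,
        (if tr ⟨n, hnlt⟩ = (s, a1) then (1:ℝ) else 0) = 0
        ∨ (if tr ⟨n, hnlt⟩ = (s, a1) then (1:ℝ) else 0) = 1 := by
      intro tr
      split
      · exact Or.inr rfl
      · exact Or.inl rfl
    have hpX : ∑ tr : Fin (n+1) → S × A,
        trajProb ρ P πE (n+1) (extendTraj tr)
          * (if tr ⟨n, hnlt⟩ = (s, a1) then (1:ℝ) else 0) = p s := by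
      have hmarg := traj_marginal hρ hP hE n n hnlt
        (fun x : S × A => if x = (s, a1) then (1:ℝ) else 0)
      have h2 : ∑ x : S × A, saDist ρ P πE n x.1 x.2
          * (if x = (s, a1) then (1:ℝ) else 0) = p s := by
        have h3 : ∀ x : S × A, saDist ρ P πE n x.1 x.2
            * (if x = (s, a1) then (1:ℝ) else 0)
            = if x = (s, a1) then saDist ρ P πE n x.1 x.2 else 0 := by
          intro x; split <;> ring
        rw [Finset.sum_congr rfl fun x _ => h3 x,
          Finset.sum_ite_eq' univ ((s, a1) : S × A)
            (fun x => saDist ρ P πE n x.1 x.2), if_pos (mem_univ _)]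
        show stateDist ρ P πE n s * πE n s a1 = p s
        rw [hEa, mul_one]
      have h4 : ∑ s' : S, ∑ a' : A, saDist ρ P πE n s' a'
          * (if (s', a') = (s, a1) then (1:ℝ) else 0) = p s := by
        refine Eq.trans ?_ h2
        exact (Fintype.sum_prod_type (f := fun x : S × A =>
          saDist ρ P πE n x.1 x.2 * (if x = (s, a1) then (1:ℝ) else 0))).symm
      exact hmarg.trans h4
    have hdev := exp_abs_dev (w := fun tr => trajProb ρ P πE (n+1) (extendTraj tr))
      hw0 hwtot hm (fun tr => if tr ⟨n, hnlt⟩ = (s, a1) then (1:ℝ) else 0) hX01 hpX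
    have habs : ∀ D : Fin m → Fin (n+1) → S × A,
        |p s - empEst D n s a1|
        = |(∑ i : Fin m, if (D i) ⟨n, hnlt⟩ = (s, a1) then (1:ℝ) else 0) / m - p s| := by
      intro D
      have hemp : empEst D n s a1
          = (∑ i : Fin m, if (D i) ⟨n, hnlt⟩ = (s, a1) then (1:ℝ) else 0) / m := by
        unfold empEst
        congr 1
        refine Finset.sum_congr rfl fun i _ => ?_
        rw [extendTraj_lt (D i) hnlt]
      rw [hemp, abs_sub_comm]
    calc ∑ D : Fin m → Fin (n+1) → S × A,
        (∏ i : Fin m, trajProb ρ P πE (n+1) (extendTraj (D i)))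
          * |p s - empEst D n s a1|
        = ∑ D : Fin m → Fin (n+1) → S × A,
            (∏ i : Fin m, trajProb ρ P πE (n+1) (extendTraj (D i)))
              * |(∑ i : Fin m, if (D i) ⟨n, hnlt⟩ = (s, a1) then (1:ℝ) else 0) / m - p s| :=
          Finset.sum_congr rfl fun D _ => by rw [habs D]
      _ ≤ Real.sqrt (p s * (1 - p s) / m) := hdev
  refine le_trans (Finset.sum_le_sum hper_s) ?_
  -- Step D: numeric bound
  have hpps : ∀ s ∈ G, 0 ≤ p s * (1 - p s) := fun s hs =>
    mul_nonneg (hp0 s) (by have := hp1 s hs; linarith)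
  have hrw : ∀ s ∈ G, Real.sqrt (p s * (1 - p s) / m)
      = Real.sqrt (p s * (1 - p s)) / Real.sqrt m := fun s hs =>
    Real.sqrt_div (hpps s hs) m
  rw [Finset.sum_congr rfl hrw, ← Finset.sum_div]
  have hcs := Finset.sum_mul_sq_le_sq_mul_sq G (fun _ => (1:ℝ))
    (fun s => Real.sqrt (p s * (1 - p s)))
  simp only [one_mul, one_pow] at hcs
  have hcard : ∑ _s ∈ G, (1:ℝ) = G.card := by
    rw [Finset.sum_const, nsmul_eq_mul, mul_one]
  have h1 : ∑ s ∈ G, (Real.sqrt (p s * (1 - p s))) ^ 2 = ∑ s ∈ G, p s * (1 - p s) :=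
    Finset.sum_congr rfl fun s hs => Real.sq_sqrt (hpps s hs)
  have h2 : ∑ s ∈ G, p s * (1 - p s) = 1 - ∑ s ∈ G, (p s) ^ 2 := by
    have : ∀ s ∈ G, p s * (1 - p s) = p s - (p s) ^ 2 := fun s _ => by ring
    rw [Finset.sum_congr rfl this, Finset.sum_sub_distrib, hpmass]
  have h3 : (1:ℝ) ≤ (G.card : ℝ) * ∑ s ∈ G, (p s) ^ 2 := by
    have := Finset.sum_mul_sq_le_sq_mul_sq G (fun _ => (1:ℝ)) p
    simp only [one_mul, one_pow] at this
    rw [hpmass, hcard] at this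
    simpa using this
  have hL0 : 0 ≤ ∑ s ∈ G, Real.sqrt (p s * (1 - p s)) :=
    Finset.sum_nonneg fun s _ => Real.sqrt_nonneg _
  have hGS : (G.card : ℝ) ≤ (Fintype.card S : ℝ) := by
    exact_mod_cast Finset.card_le_univ G
  have hfin : (∑ s ∈ G, Real.sqrt (p s * (1 - p s))) ^ 2 ≤ (Fintype.card S : ℝ) - 1 := by
    calc (∑ s ∈ G, Real.sqrt (p s * (1 - p s))) ^ 2
        ≤ (∑ _s ∈ G, (1:ℝ)) * ∑ s ∈ G, (Real.sqrt (p s * (1 - p s))) ^ 2 := hcs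
      _ = (G.card : ℝ) * (1 - ∑ s ∈ G, (p s) ^ 2) := by rw [hcard, h1, h2]
      _ ≤ (G.card : ℝ) - 1 := by nlinarith
      _ ≤ (Fintype.card S : ℝ) - 1 := by linarith
  have hnum : ∑ s ∈ G, Real.sqrt (p s * (1 - p s))
      ≤ Real.sqrt ((Fintype.card S : ℝ) - 1) := Real.le_sqrt_of_sq_le hfin
  have hsm : (0:ℝ) < Real.sqrt m := Real.sqrt_pos.2 (by positivity)
  calc (∑ s ∈ G, Real.sqrt (p s * (1 - p s))) / Real.sqrt m
      ≤ Real.sqrt ((Fintype.card S : ℝ) - 1) / Real.sqrt m :=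
        (div_le_div_iff_of_pos_right hsm).2 hnum
    _ = Real.sqrt (((Fintype.card S : ℝ) - 1) / m) :=
        (Real.sqrt_div' ((Fintype.card S : ℝ) - 1) (Nat.cast_nonneg m)).symm
    _ ≤ 2 * Real.sqrt (((Fintype.card S : ℝ) - 1) / m) := by
        have := Real.sqrt_nonneg (((Fintype.card S : ℝ) - 1) / m)
        linarith
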